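/- For every ρ̄ > 0, a function φ ∈ L¹_loc(ℝ²) satisfies ∫_{ℝ²} Ψ_ρ̄(φ(x)) dx < +∞ if and only if φ ∈ L^{3/2}(ℝ²) + L²(ℝ²). -/

import Mathlib

open Real MeasureTheory ENNReal


/-- `Ψ_ρ̄` as a function of `t`. -/
noncomputable def psiF (R t : ℝ) : ℝ :=
  (2 / 3) * |R + t| ^ ((3 : ℝ) / 2) - (2 / 3) * R ^ ((3 : ℝ) / 2) - Real.sqrt R * t

lemma rpow_three_halves {x : ℝ} (hx : 0 ≤ x) : x ^ ((3 : ℝ) / 2) = Real.sqrt x ^ 3 := by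
  rw [show ((3 : ℝ) / 2) = (1 / 2 : ℝ) * (3 : ℕ) by norm_num, Real.rpow_mul hx,
    ← Real.sqrt_eq_rpow, Real.rpow_natCast]

lemma rpow_three_halves' {x : ℝ} (hx : 0 ≤ x) :
    x ^ ((3 : ℝ) / 2) = x * Real.sqrt x := by
  rw [rpow_three_halves hx]
  have h := Real.sq_sqrt hx
  nlinarith [Real.sqrt_nonneg x]

lemma psiF_eq₁ (R t : ℝ) (hR : 0 ≤ R) (ht : -R ≤ t) :
    psiF R t = 1 / 3 * (Real.sqrt (R + t) - Real.sqrt R) ^ 2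
      * (2 * Real.sqrt (R + t) + Real.sqrt R) := by
  have h1 : 0 ≤ R + t := by linarith
  have ha := Real.sq_sqrt h1
  have hb := Real.sq_sqrt hR
  rw [psiF, abs_of_nonneg h1, rpow_three_halves h1, rpow_three_halves hR]
  linear_combination (Real.sqrt R) * ha - (Real.sqrt R) * hb

lemma psiF_eq₂ (R t : ℝ) (hR : 0 ≤ R) (ht : t ≤ -R) :
    psiF R t = 2 / 3 * Real.sqrt (-(R + t)) ^ 3
      + Real.sqrt R * (-(R + t)) + 1 / 3 * Real.sqrt R ^ 3 := by
  have h1 : R + t ≤ 0 := by linarith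
  have hb := Real.sq_sqrt hR
  rw [psiF, abs_of_nonpos h1, rpow_three_halves (by linarith : (0:ℝ) ≤ -(R+t)),
    rpow_three_halves hR]
  linear_combination (-(Real.sqrt R)) * hb

lemma psiF_nonneg (R t : ℝ) (hR : 0 ≤ R) : 0 ≤ psiF R t := by
  rcases le_or_gt (-R) t with ht | ht
  · rw [psiF_eq₁ R t hR ht]
    have := Real.sqrt_nonneg (R + t)
    have := Real.sqrt_nonneg R
    positivity
  · rw [psiF_eq₂ R t hR ht.le]
    have := Real.sqrt_nonneg (-(R + t))
    have := Real.sqrt_nonneg R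
    have : (0:ℝ) ≤ -(R + t) := by linarith
    positivity

lemma psiF_def (R t : ℝ) : psiF R t =
  (2 / 3) * |R + t| ^ ((3 : ℝ) / 2) - (2 / 3) * R ^ ((3 : ℝ) / 2) - Real.sqrt R * t := rfl

lemma lb_sq (R t : ℝ) (hR : 0 < R) (ht : |t| ≤ R) :
    t ^ 2 ≤ 9 * Real.sqrt R * psiF R t := by
  obtain ⟨ht1, ht2⟩ := abs_le.1 ht
  rw [psiF_eq₁ R t hR.le ht1]
  set A := Real.sqrt (R + t) with hAdef
  set B := Real.sqrt R with hBdef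
  have hA0 : 0 ≤ A := Real.sqrt_nonneg _
  have hB0 : 0 ≤ B := Real.sqrt_nonneg _
  have hA : A ^ 2 = R + t := Real.sq_sqrt (by linarith)
  have hB : B ^ 2 = R := Real.sq_sqrt hR.le
  have htt : t = A ^ 2 - B ^ 2 := by rw [hA, hB]; ring
  have hA2B : A ≤ 2 * B := by nlinarith
  have key : (A + B) ^ 2 ≤ 3 * B * (2 * A + B) := by nlinarith [mul_nonneg hA0 hB0]
  have h2 : t ^ 2 = (A - B) ^ 2 * (A + B) ^ 2 := by rw [htt]; ring
  rw [h2]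
  nlinarith [mul_le_mul_of_nonneg_left key (sq_nonneg (A - B))]

lemma lb_pow (R t : ℝ) (hR : 0 < R) (ht : R ≤ |t|) :
    |t| * Real.sqrt |t| ≤ 9 * psiF R t := by
  rcases le_or_gt 0 t with h0 | h0
  · rw [abs_of_nonneg h0] at ht ⊢
    rw [psiF_eq₁ R t hR.le (by linarith)]
    set A := Real.sqrt (R + t) with hAdef
    set B := Real.sqrt R with hBdef
    set S := Real.sqrt t with hSdef
    have hA0 : 0 ≤ A := Real.sqrt_nonneg _
    have hB0 : 0 ≤ B := Real.sqrt_nonneg _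
    have hS0 : 0 < S := Real.sqrt_pos.2 (by linarith)
    have hA : A ^ 2 = R + t := Real.sq_sqrt (by linarith)
    have hB : B ^ 2 = R := Real.sq_sqrt hR.le
    have hS : S ^ 2 = t := Real.sq_sqrt h0
    have hBS : B ≤ S := by nlinarith
    have hAmB : 0 ≤ A - B := by nlinarith
    have hABS : A + B ≤ 3 * S := by nlinarith [sq_nonneg (A - B - S), sq_nonneg (A + B + S)]
    have h1 : (A - B) * (A + B) = S ^ 2 := by nlinarith
    have h3 : S ≤ 3 * (A - B) := by nlinarith [mul_nonneg hAmB (sub_nonneg.2 hABS)]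
    nlinarith [mul_nonneg (sq_nonneg (A - B)) hA0,
      mul_le_mul_of_nonneg_left h3 (le_of_lt (mul_pos hS0 hS0)),
      mul_le_mul_of_nonneg_left h1.ge hAmB]
  · have hneg : t ≤ -R := by rw [abs_of_neg h0] at ht; linarith
    rw [psiF_eq₂ R t hR.le hneg]
    set C := Real.sqrt (-(R + t)) with hCdef
    set B := Real.sqrt R with hBdef
    have hC0 : 0 ≤ C := Real.sqrt_nonneg _
    have hB0 : 0 ≤ B := Real.sqrt_nonneg _
    have hC : C ^ 2 = -(R + t) := Real.sq_sqrt (by linarith)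
    have hB : B ^ 2 = R := Real.sq_sqrt hR.le
    have habs : |t| = C ^ 2 + B ^ 2 := by rw [abs_of_neg h0, hC, hB]; ring
    have hsqrt : Real.sqrt |t| ≤ C + B := by
      rw [habs]
      have h4 : C ^ 2 + B ^ 2 ≤ (C + B) ^ 2 := by nlinarith [mul_nonneg hC0 hB0]
      calc Real.sqrt (C ^ 2 + B ^ 2) ≤ Real.sqrt ((C + B) ^ 2) := Real.sqrt_le_sqrt h4
        _ = C + B := Real.sqrt_sq (by linarith)
    have h5 : |t| * Real.sqrt |t| ≤ (C ^ 2 + B ^ 2) * (C + B) := by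
      rw [habs] at hsqrt ⊢
      exact mul_le_mul_of_nonneg_left hsqrt (by positivity)
    nlinarith [mul_nonneg (sq_nonneg (C - B)) (by linarith : (0:ℝ) ≤ C + 2 * B),
      mul_nonneg (mul_nonneg hB0 hB0) hC0, mul_nonneg (mul_nonneg hC0 hC0) hB0]

lemma ub_sq (R t : ℝ) (hR : 0 < R) : Real.sqrt R * psiF R t ≤ t ^ 2 := by
  rcases le_or_gt (-R) t with ht | ht
  · rw [psiF_eq₁ R t hR.le ht]
    set A := Real.sqrt (R + t) with hAdef
    set B := Real.sqrt R with hBdef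
    have hA0 : 0 ≤ A := Real.sqrt_nonneg _
    have hB0 : 0 ≤ B := Real.sqrt_nonneg _
    have hA : A ^ 2 = R + t := Real.sq_sqrt (by linarith)
    have hB : B ^ 2 = R := Real.sq_sqrt hR.le
    have htt : t = A ^ 2 - B ^ 2 := by rw [hA, hB]; ring
    have h2 : t ^ 2 = (A - B) ^ 2 * (A + B) ^ 2 := by rw [htt]; ring
    rw [h2]
    have key : B * (2 * A + B) ≤ 3 * (A + B) ^ 2 := by nlinarith [mul_nonneg hA0 hB0, sq_nonneg A]
    nlinarith [mul_le_mul_of_nonneg_left key (sq_nonneg (A - B))]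
  · rw [psiF_eq₂ R t hR.le ht.le]
    set C := Real.sqrt (-(R + t)) with hCdef
    set B := Real.sqrt R with hBdef
    have hC0 : 0 ≤ C := Real.sqrt_nonneg _
    have hB0 : 0 ≤ B := Real.sqrt_nonneg _
    have hC : C ^ 2 = -(R + t) := Real.sq_sqrt (by linarith)
    have hB : B ^ 2 = R := Real.sq_sqrt hR.le
    have htt : t = -(C ^ 2 + B ^ 2) := by rw [hC, hB]; ring
    rw [htt]
    nlinarith [mul_nonneg (sq_nonneg (B - C)) (sq_nonneg C), sq_nonneg (B * C),
      sq_nonneg (B ^ 2 - C ^ 2), mul_nonneg (mul_nonneg hB0 hC0) (mul_nonneg hC0 hC0)]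

lemma ub_pow (R t : ℝ) (hR : 0 < R) (ht : R ≤ |t|) :
    psiF R t ≤ 3 * (|t| * Real.sqrt |t|) := by
  rcases le_or_gt 0 t with h0 | h0
  · rw [abs_of_nonneg h0] at ht ⊢
    rw [psiF_eq₁ R t hR.le (by linarith)]
    set A := Real.sqrt (R + t) with hAdef
    set B := Real.sqrt R with hBdef
    set S := Real.sqrt t with hSdef
    have hA0 : 0 ≤ A := Real.sqrt_nonneg _
    have hB0 : 0 ≤ B := Real.sqrt_nonneg _
    have hS0 : 0 < S := Real.sqrt_pos.2 (by linarith)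
    have hA : A ^ 2 = R + t := Real.sq_sqrt (by linarith)
    have hB : B ^ 2 = R := Real.sq_sqrt hR.le
    have hS : S ^ 2 = t := Real.sq_sqrt h0
    have hBS : B ≤ S := by nlinarith
    have hSA : S ≤ A := by nlinarith
    have h1 : (A - B) * (A + B) = S ^ 2 := by nlinarith
    have hAmB : 0 ≤ A - B := by nlinarith
    have hAmB_S : A - B ≤ S := by nlinarith
    have hA2S : A ≤ 2 * S := by nlinarith [sq_nonneg (A - 2 * S), sq_nonneg (A + 2 * S)]
    have htS : t * Real.sqrt t = S ^ 2 * S := by rw [hS]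
    rw [htS]
    nlinarith [mul_le_mul hAmB_S hAmB_S hAmB (le_of_lt hS0),
      mul_nonneg (mul_nonneg hS0.le hS0.le) hS0.le]
  · have hneg : t ≤ -R := by rw [abs_of_neg h0] at ht; linarith
    rw [psiF_eq₂ R t hR.le hneg]
    set C := Real.sqrt (-(R + t)) with hCdef
    set B := Real.sqrt R with hBdef
    have hC0 : 0 ≤ C := Real.sqrt_nonneg _
    have hB0 : 0 ≤ B := Real.sqrt_nonneg _
    have hC : C ^ 2 = -(R + t) := Real.sq_sqrt (by linarith)
    have hB : B ^ 2 = R := Real.sq_sqrt hR.le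
    have habs : |t| = C ^ 2 + B ^ 2 := by rw [abs_of_neg h0, hC, hB]; ring
    have hsqrt : (B + C) / 2 ≤ Real.sqrt |t| := by
      rw [habs]
      have h4 : ((B + C) / 2) ^ 2 ≤ C ^ 2 + B ^ 2 := by nlinarith [sq_nonneg (B - C)]
      calc (B + C) / 2 = Real.sqrt (((B + C) / 2) ^ 2) := (Real.sqrt_sq (by linarith)).symm
        _ ≤ Real.sqrt (C ^ 2 + B ^ 2) := Real.sqrt_le_sqrt h4
    have h5 : (C ^ 2 + B ^ 2) * ((B + C) / 2) ≤ |t| * Real.sqrt |t| := by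
      rw [habs] at hsqrt ⊢
      exact mul_le_mul_of_nonneg_left hsqrt (by positivity)
    nlinarith [mul_nonneg (mul_nonneg hB0 hB0) hC0, mul_nonneg (mul_nonneg hC0 hC0) hB0,
      mul_nonneg (mul_nonneg hB0 hB0) hB0, mul_nonneg (mul_nonneg hC0 hC0) hC0]

lemma mono32 {x y : ℝ} (hx : 0 ≤ x) (h : x ≤ y) :
    x * Real.sqrt x ≤ y * Real.sqrt y :=
  mul_le_mul h (Real.sqrt_le_sqrt h) (Real.sqrt_nonneg _) (by linarith)

lemma th_add {x y : ℝ} (hx : 0 ≤ x) (hy : 0 ≤ y) :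
    (x + y) * Real.sqrt (x + y) ≤ 2 * (x * Real.sqrt x + y * Real.sqrt y) := by
  have hpx := Real.sq_sqrt hx
  have hpy := Real.sq_sqrt hy
  have hp0 := Real.sqrt_nonneg x
  have hq0 := Real.sqrt_nonneg y
  have hsum : Real.sqrt (x + y) ≤ Real.sqrt x + Real.sqrt y := by
    have h1 : x + y ≤ (Real.sqrt x + Real.sqrt y) ^ 2 := by nlinarith [mul_nonneg hp0 hq0]
    calc Real.sqrt (x + y) ≤ Real.sqrt ((Real.sqrt x + Real.sqrt y) ^ 2) := Real.sqrt_le_sqrt h1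
      _ = Real.sqrt x + Real.sqrt y := Real.sqrt_sq (by linarith)
  have h2 : (x + y) * Real.sqrt (x + y) ≤ (x + y) * (Real.sqrt x + Real.sqrt y) :=
    mul_le_mul_of_nonneg_left hsum (by linarith)
  -- (x+y)(p+q) ≤ 2(xp + yq) where x = p², y = q²
  nlinarith [mul_nonneg (sq_nonneg (Real.sqrt x - Real.sqrt y)) (add_nonneg hp0 hq0)]

lemma ub_sum (R u v : ℝ) (hR : 0 < R) :
    psiF R (u + v) ≤ (12 + 2 / Real.sqrt R + R * Real.sqrt R)
      * (|u| * Real.sqrt |u| + v ^ 2) := by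
  set Au := |u| * Real.sqrt |u| with hAdef
  set Bv := v ^ 2 with hBdef
  have hs : 0 < Real.sqrt R := Real.sqrt_pos.2 hR
  have hA0 : 0 ≤ Au := mul_nonneg (abs_nonneg _) (Real.sqrt_nonneg _)
  have hB0 : 0 ≤ Bv := sq_nonneg _
  have hRs : 0 ≤ R * Real.sqrt R := by positivity
  have ubsq : psiF R (u + v) ≤ (u + v) ^ 2 / Real.sqrt R := by
    rw [le_div_iff₀ hs]
    linarith [ub_sq R (u + v) hR, mul_comm (Real.sqrt R) (psiF R (u + v))]
  by_cases hsm : |u| ≤ 1 ∧ |v| ≤ 1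
  · obtain ⟨hu1, hv1⟩ := hsm
    have hu2 : u ^ 2 ≤ Au := by
      have h1 : |u| ≤ Real.sqrt |u| := by
        have hq := Real.sq_sqrt (abs_nonneg u)
        have hq1 : Real.sqrt |u| ≤ 1 := by
          rw [show (1:ℝ) = Real.sqrt 1 from Real.sqrt_one.symm]
          exact Real.sqrt_le_sqrt hu1
        nlinarith [Real.sqrt_nonneg |u|]
      calc u ^ 2 = |u| * |u| := by rw [abs_mul_abs_self]; ring
        _ ≤ |u| * Real.sqrt |u| := mul_le_mul_of_nonneg_left h1 (abs_nonneg u)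
    have h3 : (u + v) ^ 2 ≤ 2 * u ^ 2 + 2 * v ^ 2 := by nlinarith [sq_nonneg (u - v)]
    have h4 : psiF R (u + v) ≤ (2 * Au + 2 * Bv) / Real.sqrt R := by
      apply ubsq.trans
      gcongr
      simp only [hBdef]; linarith
    calc psiF R (u + v) ≤ (2 * Au + 2 * Bv) / Real.sqrt R := h4
      _ = (2 / Real.sqrt R) * (Au + Bv) := by field_simp
      _ ≤ (12 + 2 / Real.sqrt R + R * Real.sqrt R) * (Au + Bv) := by
          apply mul_le_mul_of_nonneg_right ?_ (by linarith)
          have : 0 ≤ 2 / Real.sqrt R := by positivity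
          linarith
  · have hone : 1 ≤ Au + Bv := by
      rcases le_or_gt (|u|) 1 with hu | hu
      · have hv : 1 < |v| := by
          by_contra hv; exact hsm ⟨hu, by linarith⟩
        have : 1 ≤ Bv := by rw [hBdef, ← sq_abs]; nlinarith
        linarith
      · have h1 : 1 ≤ Real.sqrt |u| := by
          rw [show (1:ℝ) = Real.sqrt 1 from Real.sqrt_one.symm]
          exact Real.sqrt_le_sqrt hu.le
        have : 1 ≤ Au := by
          calc (1:ℝ) = 1 * 1 := by ring
            _ ≤ |u| * Real.sqrt |u| := mul_le_mul hu.le h1 zero_le_one (abs_nonneg u)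
        linarith
    rcases le_or_gt (|u + v|) R with htR | htR
    · have h1 : psiF R (u + v) ≤ R * Real.sqrt R := by
        apply ubsq.trans
        rw [div_le_iff₀ hs]
        have h2 : (u + v) ^ 2 ≤ R ^ 2 := by
          rw [← sq_abs]; exact pow_le_pow_left₀ (abs_nonneg _) htR 2
        have h3 : R * Real.sqrt R * Real.sqrt R = R ^ 2 := by
          have := Real.sq_sqrt hR.le; nlinarith
        linarith
      calc psiF R (u + v) ≤ R * Real.sqrt R := h1
        _ = R * Real.sqrt R * 1 := by ring
        _ ≤ R * Real.sqrt R * (Au + Bv) := mul_le_mul_of_nonneg_left hone hRs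
        _ ≤ (12 + 2 / Real.sqrt R + R * Real.sqrt R) * (Au + Bv) := by
            apply mul_le_mul_of_nonneg_right ?_ (by linarith)
            have : 0 ≤ 2 / Real.sqrt R := by positivity
            linarith
    · have hp : psiF R (u + v) ≤ 3 * (|u + v| * Real.sqrt |u + v|) := ub_pow R (u + v) hR htR.le
      have h2 : |u + v| * Real.sqrt |u + v| ≤ (|u| + |v|) * Real.sqrt (|u| + |v|) :=
        mono32 (abs_nonneg _) (abs_add_le u v)
      have h3 : (|u| + |v|) * Real.sqrt (|u| + |v|) ≤ 2 * (Au + |v| * Real.sqrt |v|) :=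
        th_add (abs_nonneg u) (abs_nonneg v)
      have h4 : |v| * Real.sqrt |v| ≤ Au + Bv := by
        rcases le_or_gt (|v|) 1 with hv | hv
        · have h5 : Real.sqrt |v| ≤ 1 := by
            rw [show (1:ℝ) = Real.sqrt 1 from Real.sqrt_one.symm]
            exact Real.sqrt_le_sqrt hv
          have h6 : |v| * Real.sqrt |v| ≤ 1 :=
            mul_le_one₀ hv (Real.sqrt_nonneg _) h5
          have hu : 1 < |u| := by
            by_contra hu; exact hsm ⟨by linarith, hv⟩
          have h7 : 1 ≤ Real.sqrt |u| := by
            rw [show (1:ℝ) = Real.sqrt 1 from Real.sqrt_one.symm]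
            exact Real.sqrt_le_sqrt hu.le
          have h8 : 1 ≤ Au :=
            calc (1:ℝ) = 1 * 1 := by ring
              _ ≤ |u| * Real.sqrt |u| := mul_le_mul hu.le h7 zero_le_one (abs_nonneg u)
          linarith
        · have h5 : Real.sqrt |v| ≤ |v| := by
            have hq := Real.sq_sqrt (abs_nonneg v)
            nlinarith [Real.sqrt_nonneg |v|, sq_nonneg (Real.sqrt |v| - 1)]
          have h6 : |v| * Real.sqrt |v| ≤ |v| * |v| :=
            mul_le_mul_of_nonneg_left h5 (abs_nonneg v)
          have h7 : |v| * |v| = Bv := by rw [hBdef, abs_mul_abs_self]; ring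
          linarith
      calc psiF R (u + v) ≤ 3 * (|u + v| * Real.sqrt |u + v|) := hp
        _ ≤ 3 * (2 * (Au + (Au + Bv))) := by
            have := h2.trans h3
            have h9 : Au + |v| * Real.sqrt |v| ≤ Au + (Au + Bv) := by linarith
            linarith
        _ = 12 * Au + 6 * Bv := by ring
        _ ≤ (12 + 2 / Real.sqrt R + R * Real.sqrt R) * (Au + Bv) := by
            have h10 : 0 ≤ 2 / Real.sqrt R := by positivity
            nlinarith

lemma psiF_continuous (R : ℝ) : Continuous (fun t => psiF R t) := by
  simp only [psiF_def]
  have h1 : Continuous (fun t : ℝ => |R + t|) := (continuous_const.add continuous_id).abs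
  have h2 : Continuous (fun t : ℝ => |R + t| ^ ((3 : ℝ) / 2)) :=
    h1.rpow_const fun x => Or.inr (by norm_num)
  exact ((continuous_const.mul h2).sub continuous_const).sub (continuous_const.mul continuous_id)

lemma enn_toReal_32 : ((3 : ℝ≥0∞) / 2).toReal = 3 / 2 := by
  rw [ENNReal.toReal_div]; norm_num

lemma enn32_ne_zero : ((3 : ℝ≥0∞) / 2) ≠ 0 := by
  simp [ENNReal.div_eq_zero_iff]

lemma enn32_ne_top : ((3 : ℝ≥0∞) / 2) ≠ ∞ := by
  simp [ENNReal.div_eq_top]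

/-- membership in ℒp iff the rpow of the norm is integrable -/
lemma memLp_iff_int (p : ℝ≥0∞) (hp0 : p ≠ 0) (hpt : p ≠ ∞)
    {f : EuclideanSpace ℝ (Fin 2) → ℝ} (hf : AEStronglyMeasurable f volume) :
    MemLp f p volume ↔
      Integrable (fun x => |f x| ^ p.toReal) (volume : Measure (EuclideanSpace ℝ (Fin 2))) := by
  rw [← memLp_norm_rpow_iff hf hp0 hpt, ENNReal.div_self hp0 hpt,
    memLp_one_iff_integrable]
  simp_rw [Real.norm_eq_abs]

theorem psi_integrable_iff_sum_Lp (ρbar : ℝ) (hρ : 0 < ρbar)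
    (φ : EuclideanSpace ℝ (Fin 2) → ℝ)
    (hφ : MeasureTheory.LocallyIntegrable φ (volume : Measure (EuclideanSpace ℝ (Fin 2)))) :
    MeasureTheory.Integrable
        (fun x => (2 / 3) * |ρbar + φ x| ^ ((3 : ℝ) / 2)
          - (2 / 3) * ρbar ^ ((3 : ℝ) / 2) - Real.sqrt ρbar * φ x)
        (volume : Measure (EuclideanSpace ℝ (Fin 2))) ↔
      ∃ f g : EuclideanSpace ℝ (Fin 2) → ℝ,
        MeasureTheory.MemLp f ((3 : ℝ≥0∞) / 2) volume ∧
        MeasureTheory.MemLp g 2 volume ∧ φ = f + g := by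
  have hpsi : (fun x => (2 / 3) * |ρbar + φ x| ^ ((3 : ℝ) / 2)
          - (2 / 3) * ρbar ^ ((3 : ℝ) / 2) - Real.sqrt ρbar * φ x)
      = fun x => psiF ρbar (φ x) := by
    funext x; rw [psiF_def]
  rw [hpsi]
  have hs : 0 < Real.sqrt ρbar := Real.sqrt_pos.2 hρ
  constructor
  · intro h
    set f : EuclideanSpace ℝ (Fin 2) → ℝ := fun x => if ρbar < |φ x| then φ x else 0 with hfdef
    set g : EuclideanSpace ℝ (Fin 2) → ℝ := fun x => if ρbar < |φ x| then 0 else φ x with hgdef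
    obtain ⟨φ', hsm, hae⟩ := hφ.aestronglyMeasurable
    have hfm : AEStronglyMeasurable f volume := by
      refine ⟨fun x => if ρbar < |φ' x| then φ' x else 0, ?_, ?_⟩
      · exact (Measurable.ite (measurableSet_lt measurable_const hsm.measurable.abs)
          hsm.measurable measurable_const).stronglyMeasurable
      · filter_upwards [hae] with x hx
        simp only [hfdef, hx]
    have hgm : AEStronglyMeasurable g volume := by
      refine ⟨fun x => if ρbar < |φ' x| then 0 else φ' x, ?_, ?_⟩
      · exact (Measurable.ite (measurableSet_lt measurable_const hsm.measurable.abs)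
          measurable_const hsm.measurable).stronglyMeasurable
      · filter_upwards [hae] with x hx
        simp only [hgdef, hx]
    refine ⟨f, g, ?_, ?_, ?_⟩
    · rw [memLp_iff_int _ enn32_ne_zero enn32_ne_top hfm, enn_toReal_32]
      refine Integrable.mono' (h.const_mul 9) ?_ ?_
      · exact ((continuous_abs.rpow_const fun x => Or.inr (by norm_num)).comp_aestronglyMeasurable
          hfm)
      · filter_upwards with x
        rw [Real.norm_eq_abs, abs_of_nonneg (Real.rpow_nonneg (abs_nonneg _) _)]
        by_cases hx : ρbar < |φ x|
        · simp only [hfdef, if_pos hx]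
          rw [rpow_three_halves' (abs_nonneg _)]
          exact lb_pow ρbar (φ x) hρ hx.le
        · simp only [hfdef, if_neg hx, abs_zero]
          rw [Real.zero_rpow (by norm_num)]
          have := psiF_nonneg ρbar (φ x) hρ.le
          linarith
    · rw [memLp_iff_int 2 two_ne_zero ENNReal.ofNat_ne_top hgm]
      have h2 : (2 : ℝ≥0∞).toReal = 2 := by simp
      rw [h2]
      refine Integrable.mono' (h.const_mul (9 * Real.sqrt ρbar)) ?_ ?_
      · exact ((continuous_abs.rpow_const fun x => Or.inr (by norm_num)).comp_aestronglyMeasurable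
          hgm)
      · filter_upwards with x
        rw [Real.norm_eq_abs, abs_of_nonneg (Real.rpow_nonneg (abs_nonneg _) _)]
        by_cases hx : ρbar < |φ x|
        · simp only [hgdef, if_pos hx, abs_zero]
          rw [Real.zero_rpow (by norm_num)]
          have := psiF_nonneg ρbar (φ x) hρ.le
          positivity
        · simp only [hgdef, if_neg hx]
          rw [show |φ x| ^ (2:ℝ) = (φ x) ^ 2 by
            rw [show (2:ℝ) = ((2:ℕ):ℝ) by norm_num, Real.rpow_natCast, sq_abs]]
          have := lb_sq ρbar (φ x) hρ (not_lt.1 hx)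
          linarith
    · funext x
      by_cases hx : ρbar < |φ x| <;> simp [hfdef, hgdef, hx]
  · rintro ⟨f, g, hf, hg, rfl⟩
    have hfi : Integrable (fun x => |f x| * Real.sqrt |f x|)
        (volume : Measure (EuclideanSpace ℝ (Fin 2))) := by
      have h1 := (memLp_iff_int _ enn32_ne_zero enn32_ne_top hf.aestronglyMeasurable).1 hf
      rw [enn_toReal_32] at h1
      refine h1.congr ?_
      filter_upwards with x
      rw [rpow_three_halves' (abs_nonneg _)]
    have hgi : Integrable (fun x => (g x) ^ 2)
        (volume : Measure (EuclideanSpace ℝ (Fin 2))) := by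
      have h1 := (memLp_iff_int 2 two_ne_zero ENNReal.ofNat_ne_top hg.aestronglyMeasurable).1 hg
      have h2 : (2 : ℝ≥0∞).toReal = 2 := by simp
      rw [h2] at h1
      refine h1.congr ?_
      filter_upwards with x
      rw [show |g x| ^ (2:ℝ) = (g x) ^ 2 by
        rw [show (2:ℝ) = ((2:ℕ):ℝ) by norm_num, Real.rpow_natCast, sq_abs]]
    have hbound : Integrable
        (fun x => (12 + 2 / Real.sqrt ρbar + ρbar * Real.sqrt ρbar)
          * (|f x| * Real.sqrt |f x| + (g x) ^ 2))
        (volume : Measure (EuclideanSpace ℝ (Fin 2))) :=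
      (hfi.add hgi).const_mul _
    refine Integrable.mono' hbound ?_ ?_
    · exact (psiF_continuous ρbar).comp_aestronglyMeasurable
        (hf.aestronglyMeasurable.add hg.aestronglyMeasurable)
    · filter_upwards with x
      rw [Real.norm_eq_abs, abs_of_nonneg (psiF_nonneg ρbar _ hρ.le)]
      exact ub_sum ρbar (f x) (g x) hρ
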